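/- Fix c > 0 and define the effective rate R(t) = (1 − t)·(1 − P_e(t)) for t ∈ (0,1), where P_e(t) = ½(1 − √(1 − exp(−4·c·t/(1−t)))). Then R is unimodal on (0,1): its derivative R′ is strictly decreasing on (0,1), is positive near 0 and negative near 1, so R′ has exactly one zero t* ∈ (0,1), R is strictly increasing on (0, t*) and strictly decreasing on (t*, 1), and t* is the unique maximizer of R on (0,1). -/

import Mathlib

open Filter Topology

noncomputable def Gf (a u : ℝ) : ℝ :=
  -(1 + Real.sqrt (1 - Real.exp (-u))) / 2
    + Real.exp (-u) * (u + a) / (4 * Real.sqrt (1 - Real.exp (-u)))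

lemma Gf_hasDeriv (a : ℝ) {u : ℝ} (hu : 0 < u) :
    HasDerivAt (Gf a)
      (-(Real.exp (-u) * (u + a) * (2 - Real.exp (-u)))
        / (8 * (Real.sqrt (1 - Real.exp (-u))) ^ 3)) u := by
  have hx0 : 0 < Real.exp (-u) := Real.exp_pos _
  have hx1 : Real.exp (-u) < 1 := by
    rw [Real.exp_lt_one_iff]; linarith
  have hq : 0 < 1 - Real.exp (-u) := by linarith
  have hg : 0 < Real.sqrt (1 - Real.exp (-u)) := Real.sqrt_pos.mpr hq
  have hg2 : (Real.sqrt (1 - Real.exp (-u))) ^ 2 = 1 - Real.exp (-u) :=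
    Real.sq_sqrt hq.le
  -- derivative of x ↦ exp(-x)
  have hxd : HasDerivAt (fun v : ℝ => Real.exp (-v)) (-Real.exp (-u)) u := by
    simpa using ((hasDerivAt_id u).neg).exp
  have hqd : HasDerivAt (fun v : ℝ => 1 - Real.exp (-v)) (Real.exp (-u)) u := by
    simpa using hxd.const_sub 1
  have hgd : HasDerivAt (fun v : ℝ => Real.sqrt (1 - Real.exp (-v)))
      (Real.exp (-u) / (2 * Real.sqrt (1 - Real.exp (-u)))) u :=
    hqd.sqrt (ne_of_gt hq)
  have h1 : HasDerivAt (fun v : ℝ => -(1 + Real.sqrt (1 - Real.exp (-v))) / 2)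
      (-(Real.exp (-u) / (2 * Real.sqrt (1 - Real.exp (-u)))) / 2) u := by
    simpa using (((hasDerivAt_const u (1:ℝ)).add hgd).neg).div_const 2
  have hnum : HasDerivAt (fun v : ℝ => Real.exp (-v) * (v + a))
      ((-Real.exp (-u)) * (u + a) + Real.exp (-u) * 1) u :=
    hxd.mul ((hasDerivAt_id u).add_const a)
  have hden : HasDerivAt (fun v : ℝ => 4 * Real.sqrt (1 - Real.exp (-v)))
      (4 * (Real.exp (-u) / (2 * Real.sqrt (1 - Real.exp (-u))))) u :=
    hgd.const_mul 4
  have hden0 : (4 : ℝ) * Real.sqrt (1 - Real.exp (-u)) ≠ 0 := by positivity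
  have h2 := hnum.div hden hden0
  have := h1.add h2
  refine this.congr_deriv (Eq.symm ?_)
  set x := Real.exp (-u) with hxdef
  set g := Real.sqrt (1 - Real.exp (-u)) with hgdef
  have hxg : x = 1 - g ^ 2 := by rw [hg2]; ring
  rw [hxg]
  have hgne : g ≠ 0 := ne_of_gt hg
  field_simp
  ring

lemma Gf_deriv_neg (c : ℝ) (hc : 0 < c) {u : ℝ} (hu : 0 < u) :
    deriv (Gf (4 * c)) u < 0 := by
  rw [(Gf_hasDeriv (4 * c) hu).deriv]
  have hx0 : 0 < Real.exp (-u) := Real.exp_pos _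
  have hx1 : Real.exp (-u) < 1 := by rw [Real.exp_lt_one_iff]; linarith
  have hg : 0 < Real.sqrt (1 - Real.exp (-u)) := Real.sqrt_pos.mpr (by linarith)
  apply div_neg_of_neg_of_pos
  · have h2x : (0:ℝ) < 2 - Real.exp (-u) := by linarith
    have huc : (0:ℝ) < u + 4 * c := by linarith
    nlinarith [mul_pos (mul_pos hx0 huc) h2x]
  · positivity

lemma Gf_strictAnti (c : ℝ) (hc : 0 < c) : StrictAntiOn (Gf (4 * c)) (Set.Ioi 0) := by
  apply strictAntiOn_of_deriv_neg (convex_Ioi 0)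
  · exact fun u hu => (Gf_hasDeriv (4 * c) hu).continuousAt.continuousWithinAt
  · intro u hu
    rw [interior_Ioi] at hu
    exact Gf_deriv_neg c hc hu

lemma Rf_alg (t c g x : ℝ) (hg : g ≠ 0) (h1t : (1 : ℝ) - t ≠ 0) :
    -(1 + g) / 2 + x * (4 * c * t / (1 - t) + 4 * c) / (4 * g) =
      (0 - 1) * (1 - 1 / 2 * (1 - g)) +
        (1 - t) * (0 - 1 / 2 * (0 - (0 - x * -(4 * c / (1 - t) ^ 2)) / (2 * g))) := by
  field_simp
  ring

lemma Rf_hasDeriv (c : ℝ) (hc : 0 < c) {t : ℝ} (ht0 : 0 < t) (ht1 : t < 1) :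
    HasDerivAt (fun t : ℝ =>
        (1 - t) * (1 - 1 / 2 * (1 - Real.sqrt (1 - Real.exp (-(4 * c * t / (1 - t)))))))
      (Gf (4 * c) (4 * c * t / (1 - t))) t := by
  have h1t : (0 : ℝ) < 1 - t := by linarith
  have hud : HasDerivAt (fun s : ℝ => 4 * c * s / (1 - s)) (4 * c / (1 - t) ^ 2) t := by
    have hn : HasDerivAt (fun s : ℝ => 4 * c * s) (4 * c) t := by
      simpa using (hasDerivAt_id t).const_mul (4 * c)
    have hd : HasDerivAt (fun s : ℝ => 1 - s) (-1) t := by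
      simpa using (hasDerivAt_id t).const_sub 1
    have := hn.div hd (ne_of_gt h1t)
    refine this.congr_deriv (Eq.symm ?_)
    field_simp
    ring
  have hu0 : 0 < 4 * c * t / (1 - t) := by positivity
  have hx1 : Real.exp (-(4 * c * t / (1 - t))) < 1 := by
    rw [Real.exp_lt_one_iff]; linarith
  have hq : 0 < 1 - Real.exp (-(4 * c * t / (1 - t))) := by linarith
  have hg : 0 < Real.sqrt (1 - Real.exp (-(4 * c * t / (1 - t)))) := Real.sqrt_pos.mpr hq
  have hxd : HasDerivAt (fun s : ℝ => Real.exp (-(4 * c * s / (1 - s))))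
      (Real.exp (-(4 * c * t / (1 - t))) * -(4 * c / (1 - t) ^ 2)) t := hud.neg.exp
  have hqd := (hasDerivAt_const t (1 : ℝ)).sub hxd
  have hgd := hqd.sqrt (ne_of_gt hq)
  have hPd := (hasDerivAt_const t (1 : ℝ)).sub
    (((hasDerivAt_const t (1 : ℝ)).sub hgd).const_mul (1 / 2 : ℝ))
  have hRd := ((hasDerivAt_const t (1 : ℝ)).sub (hasDerivAt_id t)).mul hPd
  refine hRd.congr_deriv (Eq.symm ?_)
  have hgne : Real.sqrt (1 - Real.exp (-(4 * c * t / (1 - t)))) ≠ 0 := ne_of_gt hg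
  have h1tne : (1 : ℝ) - t ≠ 0 := ne_of_gt h1t
  simp only [id, Gf]
  exact Rf_alg t c _ _ hgne h1tne

theorem bpsk_rate_unimodal (c : ℝ) (hc : 0 < c) (Pe R : ℝ → ℝ)
    (hPe : ∀ t : ℝ, Pe t = (1 / 2) * (1 - Real.sqrt (1 - Real.exp (-(4 * c * t / (1 - t))))))
    (hR : ∀ t : ℝ, R t = (1 - t) * (1 - Pe t)) :
    ∃ tstar ∈ Set.Ioo (0 : ℝ) 1,
      StrictAntiOn (deriv R) (Set.Ioo (0 : ℝ) 1) ∧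
      (∀ᶠ t in 𝓝[>] (0 : ℝ), 0 < deriv R t) ∧
      (∀ᶠ t in 𝓝[<] (1 : ℝ), deriv R t < 0) ∧
      deriv R tstar = 0 ∧
      (∀ t ∈ Set.Ioo (0 : ℝ) 1, deriv R t = 0 → t = tstar) ∧
      StrictMonoOn R (Set.Ioo 0 tstar) ∧
      StrictAntiOn R (Set.Ioo tstar 1) ∧
      (∀ t ∈ Set.Ioo (0 : ℝ) 1, t ≠ tstar → R t < R tstar) := by
  have hRfun : R = fun t : ℝ =>
      (1 - t) * (1 - 1 / 2 * (1 - Real.sqrt (1 - Real.exp (-(4 * c * t / (1 - t)))))) := by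
    funext t; rw [hR, hPe]
  set U : ℝ → ℝ := fun t => 4 * c * t / (1 - t) with hU
  have hderiv : ∀ t ∈ Set.Ioo (0 : ℝ) 1, HasDerivAt R (Gf (4 * c) (U t)) t := by
    intro t ht
    rw [hRfun]
    exact Rf_hasDeriv c hc ht.1 ht.2
  have hderiv' : ∀ t ∈ Set.Ioo (0 : ℝ) 1, deriv R t = Gf (4 * c) (U t) :=
    fun t ht => (hderiv t ht).deriv
  have hUpos : ∀ t ∈ Set.Ioo (0 : ℝ) 1, 0 < U t := by
    intro t ht
    have h1t : (0 : ℝ) < 1 - t := by linarith [ht.2]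
    have h0t := ht.1
    have : 0 < 4 * c * t / (1 - t) := by positivity
    simpa [hU] using this
  have hUmono : StrictMonoOn U (Set.Ioo (0 : ℝ) 1) := by
    intro s hs t ht hst
    have h1 : (0 : ℝ) < 1 - s := by linarith [hs.2]
    have h2 : (0 : ℝ) < 1 - t := by linarith [ht.2]
    show 4 * c * s / (1 - s) < 4 * c * t / (1 - t)
    rw [div_lt_div_iff₀ h1 h2]
    nlinarith [mul_pos hc (sub_pos.mpr hst)]
  have hGanti := Gf_strictAnti c hc
  have hFanti : StrictAntiOn (fun t => Gf (4 * c) (U t)) (Set.Ioo (0 : ℝ) 1) :=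
    hGanti.comp_strictMonoOn hUmono (fun t ht => hUpos t ht)
  have hDanti : StrictAntiOn (deriv R) (Set.Ioo (0 : ℝ) 1) := by
    intro s hs t ht hst
    rw [hderiv' s hs, hderiv' t ht]
    exact hFanti hs ht hst
  have hmem0 : ∀ᶠ t in 𝓝[>] (0 : ℝ), t ∈ Set.Ioo (0 : ℝ) 1 :=
    Filter.eventually_of_mem (Ioo_mem_nhdsGT_of_mem ⟨le_refl 0, zero_lt_one⟩) (fun t ht => ht)
  have hmem1 : ∀ᶠ t in 𝓝[<] (1 : ℝ), t ∈ Set.Ioo (0 : ℝ) 1 :=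
    Filter.eventually_of_mem (Ioo_mem_nhdsLT_of_mem ⟨zero_lt_one, le_refl 1⟩) (fun t ht => ht)
  -- U tends to 0 from the right at 0⁺
  have hUcont : ∀ s : ℝ, s ≠ 1 → ContinuousAt U s := by
    intro s hs
    have h1 : ContinuousAt (fun t : ℝ => 4 * c * t) s := by fun_prop
    have h2 : ContinuousAt (fun t : ℝ => 1 - t) s := by fun_prop
    exact h1.div h2 (sub_ne_zero.mpr (Ne.symm hs))
  have hU0 : Filter.Tendsto U (𝓝[>] (0 : ℝ)) (𝓝[>] (0 : ℝ)) := by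
    rw [tendsto_nhdsWithin_iff]
    constructor
    · have hc0 : ContinuousAt U 0 := hUcont 0 (by norm_num)
      have hU00 : U 0 = 0 := by simp [hU]
      have := hc0.tendsto.mono_left (nhdsWithin_le_nhds (s := Set.Ioi (0 : ℝ)))
      rwa [hU00] at this
    · exact hmem0.mono (fun t ht => hUpos t ht)
  -- Gf tends to atTop at 0⁺
  have hgcont : Filter.Tendsto (fun u : ℝ => Real.sqrt (1 - Real.exp (-u))) (𝓝[>] (0 : ℝ)) (𝓝 0) := by
    have hca : ContinuousAt (fun u : ℝ => Real.sqrt (1 - Real.exp (-u))) 0 := by fun_prop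
    have h0 : Real.sqrt (1 - Real.exp (-(0 : ℝ))) = 0 := by simp
    have := hca.tendsto.mono_left (nhdsWithin_le_nhds (s := Set.Ioi (0 : ℝ)))
    simpa [h0] using this
  have hgpos : ∀ᶠ u in 𝓝[>] (0 : ℝ), 0 < Real.sqrt (1 - Real.exp (-u)) := by
    filter_upwards [self_mem_nhdsWithin] with u hu
    have hu0 : (0 : ℝ) < u := hu
    have : Real.exp (-u) < 1 := by rw [Real.exp_lt_one_iff]; linarith
    exact Real.sqrt_pos.mpr (by linarith)
  have hgd : Filter.Tendsto (fun u : ℝ => 4 * Real.sqrt (1 - Real.exp (-u)))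
      (𝓝[>] (0 : ℝ)) (𝓝[>] (0 : ℝ)) := by
    rw [tendsto_nhdsWithin_iff]
    constructor
    · simpa using hgcont.const_mul 4
    · exact hgpos.mono fun u hu => Set.mem_Ioi.mpr (by positivity)
  have hnum0 : Filter.Tendsto (fun u : ℝ => Real.exp (-u) * (u + 4 * c))
      (𝓝[>] (0 : ℝ)) (𝓝 (4 * c)) := by
    have hca : ContinuousAt (fun u : ℝ => Real.exp (-u) * (u + 4 * c)) 0 := by fun_prop
    have h0 : Real.exp (-(0 : ℝ)) * ((0 : ℝ) + 4 * c) = 4 * c := by simp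
    have := hca.tendsto.mono_left (nhdsWithin_le_nhds (s := Set.Ioi (0 : ℝ)))
    simpa [h0] using this
  have hterm2 : Filter.Tendsto
      (fun u : ℝ => Real.exp (-u) * (u + 4 * c) * (4 * Real.sqrt (1 - Real.exp (-u)))⁻¹)
      (𝓝[>] (0 : ℝ)) Filter.atTop :=
    Filter.Tendsto.pos_mul_atTop (show (0:ℝ) < 4 * c by positivity) hnum0 hgd.inv_tendsto_nhdsGT_zero
  have hterm1 : Filter.Tendsto (fun u : ℝ => -(1 + Real.sqrt (1 - Real.exp (-u))) / 2)
      (𝓝[>] (0 : ℝ)) (𝓝 (-(1 + 0) / 2)) :=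
    ((tendsto_const_nhds.add hgcont).neg).div_const 2
  have hGtop : Filter.Tendsto (Gf (4 * c)) (𝓝[>] (0 : ℝ)) Filter.atTop := by
    have := hterm1.add_atTop hterm2
    have heq : Gf (4 * c) = fun u : ℝ => -(1 + Real.sqrt (1 - Real.exp (-u))) / 2
        + Real.exp (-u) * (u + 4 * c) * (4 * Real.sqrt (1 - Real.exp (-u)))⁻¹ := by
      funext u
      rw [Gf]
      ring
    rw [heq]
    exact this
  have hpos : ∀ᶠ t in 𝓝[>] (0 : ℝ), 0 < deriv R t := by
    have hcomp : Filter.Tendsto (fun t => Gf (4 * c) (U t)) (𝓝[>] (0 : ℝ)) Filter.atTop :=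
      hGtop.comp hU0
    filter_upwards [hmem0, hcomp.eventually_gt_atTop 0] with t ht hgt
    rw [hderiv' t ht]
    exact hgt
  -- U tends to atTop at 1⁻
  have hU1 : Filter.Tendsto U (𝓝[<] (1 : ℝ)) Filter.atTop := by
    have h1 : Filter.Tendsto (fun t : ℝ => 4 * c * t) (𝓝[<] (1 : ℝ)) (𝓝 (4 * c)) := by
      have hca : ContinuousAt (fun t : ℝ => 4 * c * t) 1 := by fun_prop
      have := hca.tendsto.mono_left (nhdsWithin_le_nhds (s := Set.Iio (1 : ℝ)))
      simpa using this
    have h2 : Filter.Tendsto (fun t : ℝ => 1 - t) (𝓝[<] (1 : ℝ)) (𝓝[>] (0 : ℝ)) := by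
      rw [tendsto_nhdsWithin_iff]
      constructor
      · have hca : ContinuousAt (fun t : ℝ => 1 - t) 1 := by fun_prop
        have := hca.tendsto.mono_left (nhdsWithin_le_nhds (s := Set.Iio (1 : ℝ)))
        simpa using this
      · filter_upwards [self_mem_nhdsWithin] with t ht
        exact sub_pos.mpr (Set.mem_Iio.mp ht)
    have := Filter.Tendsto.pos_mul_atTop (show (0:ℝ) < 4 * c by positivity) h1 h2.inv_tendsto_nhdsGT_zero
    rw [hU]
    simpa [Pi.inv_apply, div_eq_mul_inv] using this
  -- Gf tends to -1 at atTop
  have hGlim : Filter.Tendsto (Gf (4 * c)) Filter.atTop (𝓝 (-1)) := by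
    have hx : Filter.Tendsto (fun u : ℝ => Real.exp (-u)) Filter.atTop (𝓝 0) :=
      Real.tendsto_exp_neg_atTop_nhds_zero
    have hg1 : Filter.Tendsto (fun u : ℝ => Real.sqrt (1 - Real.exp (-u))) Filter.atTop (𝓝 1) := by
      have hq : Filter.Tendsto (fun u : ℝ => 1 - Real.exp (-u)) Filter.atTop (𝓝 1) := by
        simpa using tendsto_const_nhds.sub hx
      have := (Real.continuous_sqrt.tendsto 1).comp hq
      simpa [Real.sqrt_one, Function.comp_def] using this
    have ht1 : Filter.Tendsto (fun u : ℝ => -(1 + Real.sqrt (1 - Real.exp (-u))) / 2)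
        Filter.atTop (𝓝 (-((1 : ℝ) + 1) / 2)) :=
      ((tendsto_const_nhds.add hg1).neg).div_const 2
    have hnum : Filter.Tendsto (fun u : ℝ => Real.exp (-u) * (u + 4 * c)) Filter.atTop (𝓝 0) := by
      have hp := Real.tendsto_pow_mul_exp_neg_atTop_nhds_zero 1
      have heq : (fun u : ℝ => Real.exp (-u) * (u + 4 * c))
          = fun u : ℝ => u ^ 1 * Real.exp (-u) + 4 * c * Real.exp (-u) := by
        funext u; ring
      rw [heq]
      simpa using hp.add (hx.const_mul (4 * c))
    have ht2 : Filter.Tendsto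
        (fun u : ℝ => Real.exp (-u) * (u + 4 * c) / (4 * Real.sqrt (1 - Real.exp (-u))))
        Filter.atTop (𝓝 0) := by
      have := hnum.div (hg1.const_mul 4) (by norm_num)
      simpa [Pi.div_def] using this
    have hsum := ht1.add ht2
    have heq : Gf (4 * c) = fun u : ℝ => -(1 + Real.sqrt (1 - Real.exp (-u))) / 2
        + Real.exp (-u) * (u + 4 * c) / (4 * Real.sqrt (1 - Real.exp (-u))) := by
      funext u; rw [Gf]
    rw [heq]
    convert hsum using 2
    norm_num
  have hneg : ∀ᶠ t in 𝓝[<] (1 : ℝ), deriv R t < 0 := by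
    have hev : ∀ᶠ u in Filter.atTop, Gf (4 * c) u < 0 :=
      hGlim.eventually (eventually_lt_nhds (show (-1 : ℝ) < 0 by norm_num))
    filter_upwards [hmem1, hU1.eventually hev] with t ht hlt
    rw [hderiv' t ht]
    exact hlt
  -- Find endpoints and the zero
  obtain ⟨t₁, ht₁neg, ht₁mem⟩ := (hneg.and hmem1).exists
  obtain ⟨t₀, ht₀pos, ht₀mem⟩ :=
    (hpos.and (Filter.eventually_of_mem (Ioo_mem_nhdsGT_of_mem ⟨le_refl 0, ht₁mem.1⟩)
      (fun t ht => ht))).exists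
  have hsub : Set.Icc t₀ t₁ ⊆ Set.Ioo (0 : ℝ) 1 := fun s hs =>
    ⟨lt_of_lt_of_le ht₀mem.1 hs.1, lt_of_le_of_lt hs.2 ht₁mem.2⟩
  have hcontD : ContinuousOn (deriv R) (Set.Icc t₀ t₁) := by
    have hcG : ContinuousOn (fun t => Gf (4 * c) (U t)) (Set.Icc t₀ t₁) := by
      intro s hs
      have hsIoo := hsub hs
      have hGc : ContinuousAt (Gf (4 * c)) (U s) := (Gf_hasDeriv (4 * c) (hUpos s hsIoo)).continuousAt
      exact (hGc.comp (hUcont s (ne_of_lt hsIoo.2))).continuousWithinAt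
    exact hcG.congr (fun s hs => hderiv' s (hsub hs))
  have h0mem : (0 : ℝ) ∈ Set.Ioo (deriv R t₁) (deriv R t₀) := ⟨ht₁neg, ht₀pos⟩
  obtain ⟨tstar, htsmem, htsval⟩ := intermediate_value_Ioo' ht₀mem.2.le hcontD h0mem
  have htsIoo : tstar ∈ Set.Ioo (0 : ℝ) 1 :=
    ⟨lt_trans ht₀mem.1 htsmem.1, lt_trans htsmem.2 ht₁mem.2⟩
  -- monotonicity of R
  have hRcont : ∀ s ∈ Set.Ioo (0 : ℝ) 1, ContinuousAt R s := fun s hs => (hderiv s hs).continuousAt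
  have hmono : StrictMonoOn R (Set.Ioc 0 tstar) := by
    apply strictMonoOn_of_deriv_pos (convex_Ioc 0 tstar)
    · intro s hs
      exact (hRcont s ⟨hs.1, lt_of_le_of_lt hs.2 htsIoo.2⟩).continuousWithinAt
    · intro s hs
      rw [interior_Ioc] at hs
      have hsIoo : s ∈ Set.Ioo (0 : ℝ) 1 := ⟨hs.1, lt_trans hs.2 htsIoo.2⟩
      have := hDanti hsIoo htsIoo hs.2
      rw [htsval] at this
      linarith
  have hanti : StrictAntiOn R (Set.Ico tstar 1) := by
    apply strictAntiOn_of_deriv_neg (convex_Ico tstar 1)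
    · intro s hs
      exact (hRcont s ⟨lt_of_lt_of_le htsIoo.1 hs.1, hs.2⟩).continuousWithinAt
    · intro s hs
      rw [interior_Ico] at hs
      have hsIoo : s ∈ Set.Ioo (0 : ℝ) 1 := ⟨lt_trans htsIoo.1 hs.1, hs.2⟩
      have := hDanti htsIoo hsIoo hs.1
      rw [htsval] at this
      linarith
  refine ⟨tstar, htsIoo, hDanti, hpos, hneg, htsval, ?_,
    hmono.mono Set.Ioo_subset_Ioc_self, hanti.mono Set.Ioo_subset_Ico_self, ?_⟩
  · intro t ht h0
    exact hDanti.injOn ht htsIoo (h0.trans htsval.symm)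
  · intro t ht hne
    rcases lt_or_gt_of_ne hne with h | h
    · exact hmono ⟨ht.1, h.le⟩ ⟨htsIoo.1, le_refl tstar⟩ h
    · exact hanti ⟨le_refl tstar, htsIoo.2⟩ ⟨h.le, ht.2⟩ h
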